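/- Let α⁺, λ⁺, α⁻, λ⁻ > 0 with λ⁺ ≤ 1, r ≥ q ≥ 0, and define G : (−∞,0) → ℝ by G(ϑ) = α⁺∫₀^∞ (1/x)e^{−λ⁺x}(e^x−1)e^{ϑ(e^x−1)}dx + α⁻∫₀^∞ (1/x)e^{−λ⁻x}(e^{−x}−1)e^{ϑ(e^{−x}−1)}dx. Then there exists a unique ϑ < 0 such that G(ϑ) = r − q. -/

import Mathlib

open Real Set Filter MeasureTheory

noncomputable def memmFp (l ϑ x : ℝ) : ℝ :=
  (1 / x) * Real.exp (-l * x) * (Real.exp x - 1) * Real.exp (ϑ * (Real.exp x - 1))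

noncomputable def memmFm (l ϑ x : ℝ) : ℝ :=
  (1 / x) * Real.exp (-l * x) * (Real.exp (-x) - 1) * Real.exp (ϑ * (Real.exp (-x) - 1))

lemma memm_exp_lb (x : ℝ) : x ≤ Real.exp x - 1 := by
  have := Real.add_one_le_exp x; linarith

lemma memm_exp_ub {x : ℝ} (hx : 0 < x) : Real.exp x - 1 ≤ x * Real.exp x := by
  have h := Real.add_one_le_exp (-x)
  have h2 : (1 - x) * Real.exp x ≤ Real.exp (-x) * Real.exp x := by
    apply mul_le_mul_of_nonneg_right (by linarith) (Real.exp_pos x).le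
  rw [← Real.exp_add] at h2
  simp at h2
  nlinarith

lemma memm_one_sub_exp_neg_le {x : ℝ} : 1 - Real.exp (-x) ≤ x := by
  have := Real.add_one_le_exp (-x); linarith

lemma memm_one_sub_exp_neg_nonneg {x : ℝ} (hx : 0 ≤ x) : 0 ≤ 1 - Real.exp (-x) := by
  have : Real.exp (-x) ≤ 1 := Real.exp_le_one_iff.2 (by linarith)
  linarith

lemma memm_exp_one_ge : (2:ℝ) ≤ Real.exp 1 := by
  have := Real.add_one_le_exp 1; linarith

lemma memm_Fp_pos {l ϑ x : ℝ} (hx : 0 < x) : 0 < memmFp l ϑ x := by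
  unfold memmFp
  have h1 : (0:ℝ) < 1 / x := by positivity
  have h2 : (0:ℝ) < Real.exp x - 1 := by
    have : Real.exp 0 < Real.exp x := Real.exp_lt_exp.2 hx
    simpa using this
  positivity

lemma memm_Fm_norm_le {l ϑ x : ℝ} (hx : 0 < x) :
    ‖memmFm l ϑ x‖ ≤ Real.exp |ϑ| * Real.exp (-l * x) := by
  have habs : |Real.exp (-x) - 1| = 1 - Real.exp (-x) := by
    rw [abs_sub_comm, abs_of_nonneg (memm_one_sub_exp_neg_nonneg hx.le)]
  have hE : Real.exp (ϑ * (Real.exp (-x) - 1)) ≤ Real.exp |ϑ| := by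
    apply Real.exp_le_exp.2
    calc ϑ * (Real.exp (-x) - 1) ≤ |ϑ * (Real.exp (-x) - 1)| := le_abs_self _
      _ = |ϑ| * |Real.exp (-x) - 1| := abs_mul _ _
      _ ≤ |ϑ| * 1 := by
          apply mul_le_mul_of_nonneg_left _ (abs_nonneg _)
          rw [habs]; have := Real.exp_pos (-x); linarith
      _ = |ϑ| := mul_one _
  rw [Real.norm_eq_abs]
  unfold memmFm
  rw [abs_mul, abs_mul, abs_mul, habs]
  rw [abs_of_nonneg (by positivity : (0:ℝ) ≤ 1/x), abs_of_nonneg (Real.exp_pos _).le,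
    abs_of_nonneg (Real.exp_pos _).le]
  have h1 : 1 / x * Real.exp (-l * x) * (1 - Real.exp (-x)) ≤ Real.exp (-l * x) := by
    have h : (1 - Real.exp (-x)) ≤ x := memm_one_sub_exp_neg_le
    have h0 := memm_one_sub_exp_neg_nonneg hx.le
    rw [div_mul_eq_mul_div, div_mul_eq_mul_div, one_mul, div_le_iff₀ hx]
    nlinarith [Real.exp_pos (-l * x)]
  calc 1 / x * Real.exp (-l * x) * (1 - Real.exp (-x)) * Real.exp (ϑ * (Real.exp (-x) - 1))
      ≤ Real.exp (-l * x) * Real.exp |ϑ| := by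
        apply mul_le_mul h1 hE (Real.exp_pos _).le (Real.exp_pos _).le
    _ = Real.exp |ϑ| * Real.exp (-l * x) := mul_comm _ _

lemma memm_Fm_integrableOn (l ϑ : ℝ) (hl : 0 < l) :
    IntegrableOn (memmFm l ϑ) (Ioi (0:ℝ)) := by
  have hb : IntegrableOn (fun x : ℝ => Real.exp |ϑ| * Real.exp (-l * x)) (Ioi 0) :=
    (exp_neg_integrableOn_Ioi 0 hl).const_mul _
  apply Integrable.mono' hb
  · exact (by unfold memmFm; fun_prop : Measurable (memmFm l ϑ)).aestronglyMeasurable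
  · filter_upwards [ae_restrict_mem measurableSet_Ioi] with x hx
    exact memm_Fm_norm_le hx

lemma memm_gauss_integrable {ϑ : ℝ} (hϑ : ϑ < 0) :
    Integrable (fun x : ℝ => Real.exp (x + ϑ * x ^ 2 / 4)) := by
  set b : ℝ := -ϑ / 4 with hbdef
  have hb : 0 < b := by simp [hbdef]; linarith
  have h1 : Integrable (fun x : ℝ => Real.exp (-b * (x - 1 / (2 * b)) ^ 2)) :=
    (integrable_exp_neg_mul_sq hb).comp_sub_right (1 / (2 * b))
  have h2 := h1.const_mul (Real.exp (1 / (4 * b)))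
  apply h2.congr
  filter_upwards with x
  rw [← Real.exp_add]
  congr 1
  have hϑ' : ϑ ≠ 0 := ne_of_lt hϑ
  rw [hbdef]
  field_simp
  ring

lemma memm_Fp_le {l ϑ x : ℝ} (hl : 0 < l) (hϑ : ϑ < 0) (hx : 0 < x) :
    memmFp l ϑ x ≤ Real.exp (x + ϑ * x ^ 2 / 4) := by
  have h1 : (1 / x) * (Real.exp x - 1) ≤ Real.exp x := by
    have h := memm_exp_ub hx
    rw [div_mul_eq_mul_div, one_mul, div_le_iff₀ hx]
    nlinarith
  have h2 : Real.exp (-l * x) ≤ 1 := Real.exp_le_one_iff.2 (by nlinarith)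
  have h3 : Real.exp (ϑ * (Real.exp x - 1)) ≤ Real.exp (ϑ * (x ^ 2 / 4)) := by
    apply Real.exp_le_exp.2
    apply mul_le_mul_of_nonpos_left _ hϑ.le
    have h := Real.add_one_le_exp (x / 2)
    have hx2 : Real.exp x = Real.exp (x / 2) * Real.exp (x / 2) := by
      rw [← Real.exp_add]; ring_nf
    nlinarith [Real.exp_pos (x / 2)]
  have hnn1 : (0:ℝ) ≤ (1 / x) * (Real.exp x - 1) := by
    have : (0:ℝ) < Real.exp x - 1 := by
      have : Real.exp 0 < Real.exp x := Real.exp_lt_exp.2 hx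
      simpa using this
    positivity
  calc memmFp l ϑ x
      = ((1 / x) * (Real.exp x - 1)) * Real.exp (-l * x) * Real.exp (ϑ * (Real.exp x - 1)) := by
        unfold memmFp; ring
    _ ≤ (Real.exp x * 1) * Real.exp (ϑ * (x ^ 2 / 4)) := by
        apply mul_le_mul _ h3 (Real.exp_pos _).le (by positivity)
        exact mul_le_mul h1 h2 (Real.exp_pos _).le (Real.exp_pos _).le
    _ = Real.exp (x + ϑ * x ^ 2 / 4) := by
        rw [mul_one, ← Real.exp_add]; ring_nf

lemma memm_Fp_integrableOn {l ϑ : ℝ} (hl : 0 < l) (hϑ : ϑ < 0) :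
    IntegrableOn (memmFp l ϑ) (Ioi (0:ℝ)) := by
  apply Integrable.mono' (memm_gauss_integrable hϑ).integrableOn
  · exact (by unfold memmFp; fun_prop : Measurable (memmFp l ϑ)).aestronglyMeasurable
  · filter_upwards [ae_restrict_mem measurableSet_Ioi] with x hx
    have hx' : (0:ℝ) < x := hx
    rw [Real.norm_eq_abs, abs_of_pos (memm_Fp_pos hx')]
    exact memm_Fp_le hl hϑ hx'

lemma memm_Fp_mono {l ϑ1 ϑ2 x : ℝ} (h : ϑ1 ≤ ϑ2) (hx : 0 < x) :
    memmFp l ϑ1 x ≤ memmFp l ϑ2 x := by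
  unfold memmFp
  have h2 : (0:ℝ) < Real.exp x - 1 := by
    have : Real.exp 0 < Real.exp x := Real.exp_lt_exp.2 hx
    simpa using this
  have hc : (0:ℝ) ≤ 1 / x * Real.exp (-l * x) * (Real.exp x - 1) := by positivity
  exact mul_le_mul_of_nonneg_left
    (Real.exp_le_exp.2 (mul_le_mul_of_nonneg_right h h2.le)) hc

lemma memm_Fp_strict_mono {l ϑ1 ϑ2 x : ℝ} (h : ϑ1 < ϑ2) (hx : 0 < x) :
    memmFp l ϑ1 x < memmFp l ϑ2 x := by
  unfold memmFp
  have h2 : (0:ℝ) < Real.exp x - 1 := by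
    have : Real.exp 0 < Real.exp x := Real.exp_lt_exp.2 hx
    simpa using this
  have hc : (0:ℝ) < 1 / x * Real.exp (-l * x) * (Real.exp x - 1) := by positivity
  exact mul_lt_mul_of_pos_left
    (Real.exp_lt_exp.2 (mul_lt_mul_of_pos_right h h2)) hc

lemma memm_Fm_mono {l ϑ1 ϑ2 x : ℝ} (h : ϑ1 ≤ ϑ2) (hx : 0 < x) :
    memmFm l ϑ1 x ≤ memmFm l ϑ2 x := by
  unfold memmFm
  have h2 : Real.exp (-x) - 1 < 0 := by
    have h0 : Real.exp (-x) < Real.exp 0 := Real.exp_lt_exp.2 (by linarith)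
    rw [Real.exp_zero] at h0; linarith
  have hE : Real.exp (ϑ2 * (Real.exp (-x) - 1)) ≤ Real.exp (ϑ1 * (Real.exp (-x) - 1)) :=
    Real.exp_le_exp.2 (mul_le_mul_of_nonpos_right h h2.le)
  have hc : (0:ℝ) ≤ 1 / x * Real.exp (-l * x) := by positivity
  nlinarith [mul_le_mul_of_nonneg_left hE hc]

lemma memm_Ip_strict {l ϑ1 ϑ2 : ℝ} (hl : 0 < l) (h : ϑ1 < ϑ2) (hϑ2 : ϑ2 < 0) :
    (∫ x in Ioi (0:ℝ), memmFp l ϑ1 x) < ∫ x in Ioi (0:ℝ), memmFp l ϑ2 x := by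
  have hi1 := memm_Fp_integrableOn (ϑ := ϑ1) hl (lt_trans h hϑ2)
  have hi2 := memm_Fp_integrableOn (ϑ := ϑ2) hl hϑ2
  have hpos : 0 < ∫ x in Ioi (0:ℝ), (memmFp l ϑ2 x - memmFp l ϑ1 x) := by
    rw [setIntegral_pos_iff_support_of_nonneg_ae]
    · have hsub : Ioi (0:ℝ) ⊆
          (Function.support fun x => memmFp l ϑ2 x - memmFp l ϑ1 x) ∩ Ioi 0 := by
        intro x hx
        refine ⟨?_, hx⟩
        simp only [Function.mem_support]
        exact ne_of_gt (sub_pos.2 (memm_Fp_strict_mono h hx))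
      calc (0:ENNReal) < volume (Ioi (0:ℝ)) := by simp [Real.volume_Ioi]
        _ ≤ _ := measure_mono hsub
    · filter_upwards [ae_restrict_mem measurableSet_Ioi] with x hx
      have := memm_Fp_strict_mono (l := l) h hx
      simp only [Pi.zero_apply]; linarith
    · exact hi2.sub hi1
  rw [integral_sub hi2 hi1] at hpos
  linarith

lemma memm_Ip_continuousAt {l ϑ0 : ℝ} (hl : 0 < l) (hϑ0 : ϑ0 < 0) :
    ContinuousAt (fun ϑ => ∫ x in Ioi (0:ℝ), memmFp l ϑ x) ϑ0 := by
  apply continuousAt_of_dominated (bound := memmFp l (ϑ0 / 2))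
  · exact Eventually.of_forall fun ϑ =>
      (by unfold memmFp; fun_prop : Measurable (memmFp l ϑ)).aestronglyMeasurable
  · filter_upwards [Iio_mem_nhds (by linarith : ϑ0 < ϑ0 / 2)] with ϑ hϑ
    filter_upwards [ae_restrict_mem measurableSet_Ioi] with x hx
    rw [Real.norm_eq_abs, abs_of_pos (memm_Fp_pos hx)]
    exact memm_Fp_mono (le_of_lt hϑ) hx
  · exact memm_Fp_integrableOn hl (by linarith)
  · filter_upwards with x
    exact (by unfold memmFp; fun_prop :
      Continuous fun ϑ : ℝ => memmFp l ϑ x).continuousAt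

lemma memm_Im_continuousAt {l : ℝ} (ϑ0 : ℝ) (hl : 0 < l) :
    ContinuousAt (fun ϑ => ∫ x in Ioi (0:ℝ), memmFm l ϑ x) ϑ0 := by
  apply continuousAt_of_dominated
    (bound := fun x => Real.exp (|ϑ0| + 1) * Real.exp (-l * x))
  · exact Eventually.of_forall fun ϑ =>
      (by unfold memmFm; fun_prop : Measurable (memmFm l ϑ)).aestronglyMeasurable
  · filter_upwards [Metric.ball_mem_nhds ϑ0 one_pos] with ϑ hϑ
    filter_upwards [ae_restrict_mem measurableSet_Ioi] with x hx
    refine le_trans (memm_Fm_norm_le hx) ?_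
    have : |ϑ| ≤ |ϑ0| + 1 := by
      have := mem_ball_iff_norm.1 hϑ
      rw [Real.norm_eq_abs] at this
      calc |ϑ| = |ϑ0 + (ϑ - ϑ0)| := by ring_nf
        _ ≤ |ϑ0| + |ϑ - ϑ0| := abs_add_le _ _
        _ ≤ |ϑ0| + 1 := by linarith
    exact mul_le_mul_of_nonneg_right (Real.exp_le_exp.2 this) (Real.exp_pos _).le
  · exact (exp_neg_integrableOn_Ioi 0 hl).const_mul _
  · filter_upwards with x
    exact (by unfold memmFm; fun_prop :
      Continuous fun ϑ : ℝ => memmFm l ϑ x).continuousAt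

lemma memm_factor_ge {l x : ℝ} (hl1 : l ≤ 1) (hx : 1 ≤ x) :
    (1:ℝ)/2 ≤ Real.exp (-l * x) * (Real.exp x - 1) := by
  have hAB : Real.exp (-l * x) * Real.exp x = Real.exp ((1 - l) * x) := by
    rw [← Real.exp_add]; ring_nf
  have hA : Real.exp (-l * x) = Real.exp ((1 - l) * x) * Real.exp (-x) := by
    rw [← Real.exp_add]; ring_nf
  have hAB1 : (1:ℝ) ≤ Real.exp ((1 - l) * x) := by
    calc (1:ℝ) = Real.exp 0 := Real.exp_zero.symm
      _ ≤ Real.exp ((1 - l) * x) := Real.exp_le_exp.2 (by nlinarith)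
  have he : Real.exp (-x) ≤ 1 / 2 := by
    have h1 : Real.exp (-x) ≤ Real.exp (-1) := Real.exp_le_exp.2 (by linarith)
    have h2 : Real.exp (-1) = 1 / Real.exp 1 := by
      rw [Real.exp_neg]; rw [inv_eq_one_div]
    have := memm_exp_one_ge
    have h3 : (1:ℝ) / Real.exp 1 ≤ 1 / 2 := by
      apply div_le_div_of_nonneg_left <;> linarith
    linarith [h1, h2 ▸ h1]
  nlinarith [Real.exp_pos ((1 - l) * x), Real.exp_pos (-x)]

lemma memm_Ip_large {l : ℝ} (hl : 0 < l) (hl1 : l ≤ 1) (M : ℝ) :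
    ∃ ϑ : ℝ, -1 < ϑ ∧ ϑ < 0 ∧ M ≤ ∫ x in Ioi (0:ℝ), memmFp l ϑ x := by
  set R : ℝ := Real.exp (4 * max M 0 + 4) with hRdef
  have hR1 : 1 < R := by
    rw [hRdef, ← Real.exp_zero]
    apply Real.exp_lt_exp.2
    have : (0:ℝ) ≤ max M 0 := le_max_right _ _
    linarith
  have hlogR : Real.log R = 4 * max M 0 + 4 := Real.log_exp _
  have hER : (2:ℝ) < Real.exp R := by
    calc (2:ℝ) ≤ Real.exp 1 := memm_exp_one_ge
      _ < Real.exp R := Real.exp_lt_exp.2 hR1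
  have hERpos : 0 < Real.exp R - 1 := by linarith
  set ϑ : ℝ := -Real.log 2 / (Real.exp R - 1) with hϑdef
  have hlog2pos : 0 < Real.log 2 := Real.log_pos (by norm_num)
  have hlog2lt : Real.log 2 < 1 := by
    have := Real.log_lt_sub_one_of_pos (by norm_num : (0:ℝ) < 2) (by norm_num)
    linarith
  have hϑneg : ϑ < 0 := div_neg_of_neg_of_pos (by linarith) hERpos
  have hϑgt : -1 < ϑ := by
    rw [hϑdef, neg_div, neg_lt_neg_iff, div_lt_one hERpos]
    linarith
  refine ⟨ϑ, hϑgt, hϑneg, ?_⟩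
  have hϑR : ϑ * (Real.exp R - 1) = -Real.log 2 := by
    rw [hϑdef]; field_simp
  have hpt : ∀ x ∈ Ioc (1:ℝ) R, 1/4 * (1/x) ≤ memmFp l ϑ x := by
    intro x hx
    obtain ⟨hx1, hxR⟩ := hx
    have hx0 : 0 < x := by linarith
    have hE : (1:ℝ)/2 ≤ Real.exp (ϑ * (Real.exp x - 1)) := by
      have h1 : ϑ * (Real.exp R - 1) ≤ ϑ * (Real.exp x - 1) := by
        apply mul_le_mul_of_nonpos_left _ hϑneg.le
        have : Real.exp x ≤ Real.exp R := Real.exp_le_exp.2 hxR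
        linarith
      have h2 : Real.exp (ϑ * (Real.exp R - 1)) = 1 / 2 := by
        rw [hϑR, Real.exp_neg, Real.exp_log (by norm_num : (0:ℝ) < 2)]
        norm_num
      calc (1:ℝ)/2 = Real.exp (ϑ * (Real.exp R - 1)) := h2.symm
        _ ≤ Real.exp (ϑ * (Real.exp x - 1)) := Real.exp_le_exp.2 h1
    have hfac := memm_factor_ge hl1 hx1.le
    have h1x : (0:ℝ) < 1 / x := by positivity
    calc 1/4 * (1/x) = (1/x) * (1/2) * (1/2) := by ring
      _ ≤ (1/x) * (Real.exp (-l * x) * (Real.exp x - 1)) * Real.exp (ϑ * (Real.exp x - 1)) := by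
          apply mul_le_mul _ hE (by norm_num) _
          · exact mul_le_mul_of_nonneg_left hfac h1x.le
          · positivity
      _ = memmFp l ϑ x := by unfold memmFp; ring
  have hint : IntegrableOn (memmFp l ϑ) (Ioi (0:ℝ)) := memm_Fp_integrableOn hl hϑneg
  have hint2 : IntegrableOn (memmFp l ϑ) (Ioc (1:ℝ) R) :=
    hint.mono_set (Ioc_subset_Ioi_self.trans (Ioi_subset_Ioi (by norm_num)))
  have hint3 : IntegrableOn (fun x : ℝ => 1/4 * (1/x)) (Ioc (1:ℝ) R) := by
    apply IntegrableOn.mono_set _ Ioc_subset_Icc_self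
    apply ContinuousOn.integrableOn_Icc
    apply ContinuousOn.mul continuousOn_const
    apply ContinuousOn.div continuousOn_const continuousOn_id
    intro x hx
    have h1 : (1:ℝ) ≤ x := hx.1
    intro h; simp only [id_eq] at h; rw [h] at h1; norm_num at h1
  have step1 : (∫ x in Ioc (1:ℝ) R, memmFp l ϑ x) ≤ ∫ x in Ioi (0:ℝ), memmFp l ϑ x := by
    apply setIntegral_mono_set hint
    · filter_upwards [ae_restrict_mem measurableSet_Ioi] with x hx
      exact (memm_Fp_pos hx).le
    · exact HasSubset.Subset.eventuallyLE
        (Ioc_subset_Ioi_self.trans (Ioi_subset_Ioi (by norm_num)))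
  have step2 : (∫ x in Ioc (1:ℝ) R, (1/4 : ℝ) * (1/x)) ≤ ∫ x in Ioc (1:ℝ) R, memmFp l ϑ x :=
    setIntegral_mono_on hint3 hint2 measurableSet_Ioc hpt
  have step3 : (∫ x in Ioc (1:ℝ) R, (1/4 : ℝ) * (1/x)) = 1/4 * Real.log R := by
    rw [MeasureTheory.integral_const_mul]
    congr 1
    rw [← intervalIntegral.integral_of_le hR1.le]
    rw [integral_one_div (by
      rw [Set.mem_uIcc]
      rintro (⟨h1, h2⟩ | ⟨h1, h2⟩) <;> linarith)]
    rw [div_one]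
  have : M ≤ 1/4 * Real.log R := by
    rw [hlogR]
    have : M ≤ max M 0 := le_max_left _ _
    linarith
  linarith

lemma memm_Im_bounded {l ϑ : ℝ} (hl : 0 < l) (h1 : -1 ≤ ϑ) (h2 : ϑ ≤ 0) :
    |∫ x in Ioi (0:ℝ), memmFm l ϑ x| ≤ ∫ x in Ioi (0:ℝ), Real.exp 1 * Real.exp (-l * x) := by
  rw [← Real.norm_eq_abs]
  apply norm_integral_le_of_norm_le ((exp_neg_integrableOn_Ioi 0 hl).const_mul _)
  filter_upwards [ae_restrict_mem measurableSet_Ioi] with x hx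
  refine le_trans (memm_Fm_norm_le hx) ?_
  have : |ϑ| ≤ 1 := abs_le.2 ⟨h1, by linarith⟩
  exact mul_le_mul_of_nonneg_right (Real.exp_le_exp.2 this) (Real.exp_pos _).le

lemma memm_Ip_small {l ϑ : ℝ} (hl : 0 < l) (hϑ : ϑ ≤ -2) :
    (∫ x in Ioi (0:ℝ), memmFp l ϑ x) ≤ 1 := by
  have hϑ0 : ϑ < 0 := by linarith
  have hpt : ∀ x ∈ Ioi (0:ℝ), memmFp l ϑ x ≤ Real.exp (-x) := by
    intro x hx
    have hx0 : 0 < x := hx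
    have h1 : (1/x) * (Real.exp x - 1) ≤ Real.exp x := by
      rw [div_mul_eq_mul_div, one_mul, div_le_iff₀ hx0]
      nlinarith [memm_exp_ub hx0]
    have h2 : Real.exp (ϑ * (Real.exp x - 1)) ≤ Real.exp (ϑ * x) := by
      apply Real.exp_le_exp.2
      exact mul_le_mul_of_nonpos_left (memm_exp_lb x) hϑ0.le
    have hnn : (0:ℝ) ≤ (1/x) * (Real.exp x - 1) := by
      have h3 : (0:ℝ) < Real.exp x - 1 := by
        have : Real.exp 0 < Real.exp x := Real.exp_lt_exp.2 hx0
        simpa using this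
      positivity
    calc memmFp l ϑ x
        = ((1/x) * (Real.exp x - 1)) * Real.exp (-l * x) * Real.exp (ϑ * (Real.exp x - 1)) := by
          unfold memmFp; ring
      _ ≤ (Real.exp x * Real.exp (-l * x)) * Real.exp (ϑ * x) := by
          apply mul_le_mul _ h2 (Real.exp_pos _).le (by positivity)
          exact mul_le_mul_of_nonneg_right h1 (Real.exp_pos _).le
      _ = Real.exp ((1 - l + ϑ) * x) := by rw [← Real.exp_add, ← Real.exp_add]; ring_nf
      _ ≤ Real.exp (-x) := by
          apply Real.exp_le_exp.2
          nlinarith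
  have hexp : IntegrableOn (fun x : ℝ => Real.exp (-x)) (Ioi (0:ℝ)) := by
    simpa using exp_neg_integrableOn_Ioi (0:ℝ) one_pos
  calc (∫ x in Ioi (0:ℝ), memmFp l ϑ x) ≤ ∫ x in Ioi (0:ℝ), Real.exp (-x) :=
        setIntegral_mono_on (memm_Fp_integrableOn hl hϑ0) hexp measurableSet_Ioi hpt
    _ = 1 := integral_exp_neg_Ioi_zero

lemma memm_Im_neg_large {l ϑ : ℝ} (hl : 0 < l) (hϑ : ϑ < 0) :
    (∫ x in Ioi (0:ℝ), memmFm l ϑ x) ≤ -(Real.exp (-2*l) / 4 * Real.exp (-ϑ/2)) := by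
  set c : ℝ := Real.exp (-2*l) / 4 * Real.exp (-ϑ/2) with hc
  have hcpos : 0 < c := by rw [hc]; positivity
  have hpt : ∀ x ∈ Ioc (1:ℝ) 2, memmFm l ϑ x ≤ -c := by
    intro x hx
    obtain ⟨hx1, hx2⟩ := hx
    have hx0 : 0 < x := by linarith
    have hhalf : (1:ℝ)/2 ≤ 1 - Real.exp (-x) := by
      have h1 : Real.exp (-x) ≤ Real.exp (-1) := Real.exp_le_exp.2 (by linarith)
      have h2 : Real.exp (-1) ≤ 1/2 := by
        rw [Real.exp_neg]
        rw [inv_le_comm₀ (Real.exp_pos 1) (by norm_num)]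
        simpa using memm_exp_one_ge
      linarith
    have hE : Real.exp (-ϑ/2) ≤ Real.exp (ϑ * (Real.exp (-x) - 1)) := by
      apply Real.exp_le_exp.2
      have h : ϑ * (Real.exp (-x) - 1) = (-ϑ) * (1 - Real.exp (-x)) := by ring
      rw [h]
      calc -ϑ/2 = (-ϑ) * (1/2) := by ring
        _ ≤ (-ϑ) * (1 - Real.exp (-x)) :=
          mul_le_mul_of_nonneg_left hhalf (by linarith)
    have h1x : (1:ℝ)/2 ≤ 1/x := by
      rw [div_le_div_iff₀ (by norm_num) hx0]; linarith
    have hexl : Real.exp (-2*l) ≤ Real.exp (-l*x) := by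
      apply Real.exp_le_exp.2; nlinarith
    have key : c ≤ (1/x) * Real.exp (-l*x) * (1 - Real.exp (-x)) *
        Real.exp (ϑ * (Real.exp (-x) - 1)) := by
      calc c = (1/2) * Real.exp (-2*l) * (1/2) * Real.exp (-ϑ/2) := by rw [hc]; ring
        _ ≤ (1/x) * Real.exp (-l*x) * (1 - Real.exp (-x)) *
            Real.exp (ϑ * (Real.exp (-x) - 1)) := by
            apply mul_le_mul _ hE (Real.exp_pos _).le
            · positivity
            apply mul_le_mul _ hhalf (by norm_num)
            · positivity
            exact mul_le_mul h1x hexl (Real.exp_pos _).le (by positivity)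
    have heq : memmFm l ϑ x =
        -((1/x) * Real.exp (-l*x) * (1 - Real.exp (-x)) *
          Real.exp (ϑ * (Real.exp (-x) - 1))) := by
      unfold memmFm; ring
    rw [heq]
    linarith
  have hint : IntegrableOn (memmFm l ϑ) (Ioc (1:ℝ) 2) :=
    (memm_Fm_integrableOn l ϑ hl).mono_set
      (Ioc_subset_Ioi_self.trans (Ioi_subset_Ioi (by norm_num)))
  have step1 : (∫ x in Ioi (0:ℝ), memmFm l ϑ x) ≤ ∫ x in Ioc (1:ℝ) 2, memmFm l ϑ x := by
    have hneg : ∀ᵐ x ∂(volume.restrict (Ioi (0:ℝ))), 0 ≤ -memmFm l ϑ x := by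
      filter_upwards [ae_restrict_mem measurableSet_Ioi] with x hx
      have hx0 : 0 < x := hx
      have : memmFm l ϑ x ≤ 0 := by
        unfold memmFm
        have h2 : Real.exp (-x) - 1 ≤ 0 := by
          have h0 : Real.exp (-x) < Real.exp 0 := Real.exp_lt_exp.2 (by linarith)
          rw [Real.exp_zero] at h0; linarith
        have h5 : 1 / x * Real.exp (-l * x) * (Real.exp (-x) - 1) ≤ 0 :=
          mul_nonpos_of_nonneg_of_nonpos (by positivity) h2
        exact mul_nonpos_of_nonpos_of_nonneg h5 (Real.exp_pos _).le
      linarith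
    have hsub : Ioc (1:ℝ) 2 ⊆ Ioi (0:ℝ) :=
      Ioc_subset_Ioi_self.trans (Ioi_subset_Ioi (by norm_num))
    have := setIntegral_mono_set (s := Ioc (1:ℝ) 2)
      ((memm_Fm_integrableOn l ϑ hl).neg) hneg hsub.eventuallyLE
    simp only [Pi.neg_apply, integral_neg] at this
    linarith
  have step2 : (∫ x in Ioc (1:ℝ) 2, memmFm l ϑ x) ≤ ∫ x in Ioc (1:ℝ) 2, (-c : ℝ) := by
    apply setIntegral_mono_on hint (integrableOn_const (by
      rw [Real.volume_Ioc]; norm_num)) measurableSet_Ioc hpt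
  have step3 : (∫ x in Ioc (1:ℝ) 2, (-c : ℝ)) = -c := by
    rw [setIntegral_const, Real.volume_real_Ioc]
    norm_num
  linarith

theorem memm_exists_unique_parameter
    (ap lp am lm r q : ℝ)
    (hap : 0 < ap) (hlp : 0 < lp) (ham : 0 < am) (hlm : 0 < lm)
    (hlp1 : lp ≤ 1) (hq : 0 ≤ q) (hrq : q ≤ r)
    (G : ℝ → ℝ)
    (hG : ∀ ϑ, G ϑ =
      ap * (∫ x in Ioi (0 : ℝ),
        (1 / x) * Real.exp (-lp * x) * (Real.exp x - 1) * Real.exp (ϑ * (Real.exp x - 1)))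
      + am * (∫ x in Ioi (0 : ℝ),
        (1 / x) * Real.exp (-lm * x) * (Real.exp (-x) - 1) *
          Real.exp (ϑ * (Real.exp (-x) - 1)))) :
    ∃! ϑ, ϑ < 0 ∧ G ϑ = r - q := by
  have hGeq : ∀ ϑ, G ϑ = ap * (∫ x in Ioi (0:ℝ), memmFp lp ϑ x)
      + am * (∫ x in Ioi (0:ℝ), memmFm lm ϑ x) := by
    intro ϑ
    rw [hG ϑ]
    simp only [memmFp, memmFm]
  -- strict monotonicity on negatives
  have hmono : ∀ ϑ1 ϑ2 : ℝ, ϑ1 < ϑ2 → ϑ2 < 0 → G ϑ1 < G ϑ2 := by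
    intro ϑ1 ϑ2 h hneg
    rw [hGeq ϑ1, hGeq ϑ2]
    have h1 := memm_Ip_strict hlp h hneg
    have h2 : (∫ x in Ioi (0:ℝ), memmFm lm ϑ1 x) ≤ ∫ x in Ioi (0:ℝ), memmFm lm ϑ2 x := by
      apply setIntegral_mono_on (memm_Fm_integrableOn lm ϑ1 hlm)
        (memm_Fm_integrableOn lm ϑ2 hlm) measurableSet_Ioi
      intro x hx
      exact memm_Fm_mono h.le hx
    have h3 := mul_lt_mul_of_pos_left h1 hap
    have h4 := mul_le_mul_of_nonneg_left h2 ham.le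
    linarith
  -- upper point
  set C : ℝ := ∫ x in Ioi (0:ℝ), Real.exp 1 * Real.exp (-lm * x) with hC
  obtain ⟨ϑb, hb1, hb2, hbM⟩ := memm_Ip_large hlp hlp1 ((r - q + am * C) / ap)
  have hGb : r - q ≤ G ϑb := by
    rw [hGeq ϑb]
    have hImb := memm_Im_bounded (ϑ := ϑb) hlm hb1.le hb2.le
    have h1 : ap * ((r - q + am * C) / ap) ≤ ap * (∫ x in Ioi (0:ℝ), memmFp lp ϑb x) :=
      mul_le_mul_of_nonneg_left hbM hap.le
    rw [mul_div_cancel₀ _ (ne_of_gt hap)] at h1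
    have h2 : -C ≤ ∫ x in Ioi (0:ℝ), memmFm lm ϑb x := by
      have := (abs_le.1 hImb).1
      rw [← hC] at this
      linarith
    have h3 := mul_le_mul_of_nonneg_left h2 ham.le
    linarith
  -- lower point
  set c0 : ℝ := Real.exp (-2*lm) / 4 with hc0
  have hc0pos : 0 < c0 := by rw [hc0]; positivity
  set K : ℝ := ap / (am * c0) with hK
  have hKpos : 0 < K := by rw [hK]; positivity
  set a0 : ℝ := min (-2 : ℝ) (-2 * Real.log K) with ha0def
  have ha0le : a0 ≤ -2 := min_le_left _ _
  have ha0le2 : a0 ≤ -2 * Real.log K := min_le_right _ _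
  have ha0neg : a0 < 0 := lt_of_le_of_lt ha0le (by norm_num)
  have hIp0 := memm_Ip_small (l := lp) hlp ha0le
  have hIm0 := memm_Im_neg_large (l := lm) hlm ha0neg
  have hKle : K ≤ Real.exp (-a0/2) := by
    rw [← Real.exp_log hKpos]
    apply Real.exp_le_exp.2
    linarith
  have hGa0 : G a0 ≤ r - q := by
    rw [hGeq a0]
    have h1 : ap * (∫ x in Ioi (0:ℝ), memmFp lp a0 x) ≤ ap * 1 :=
      mul_le_mul_of_nonneg_left hIp0 hap.le
    have h2 : am * (∫ x in Ioi (0:ℝ), memmFm lm a0 x) ≤ am * (-(c0 * Real.exp (-a0/2))) :=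
      mul_le_mul_of_nonneg_left hIm0 ham.le
    have h3 : ap ≤ am * c0 * Real.exp (-a0/2) := by
      have h4 : am * c0 * K = ap := by
        rw [hK]
        field_simp
      calc ap = am * c0 * K := h4.symm
        _ ≤ am * c0 * Real.exp (-a0/2) :=
          mul_le_mul_of_nonneg_left hKle (by positivity)
    have h5 : 0 ≤ r - q := by linarith
    nlinarith
  -- combine: IVT on [a, ϑb]
  set a : ℝ := min a0 (ϑb - 1) with hadef
  have ha_lt_b : a < ϑb := lt_of_le_of_lt (min_le_right _ _) (by linarith)
  have ha_neg : a < 0 := lt_of_le_of_lt (min_le_left _ _) ha0neg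
  have hGa : G a ≤ r - q := by
    rcases eq_or_lt_of_le (min_le_left a0 (ϑb - 1)) with h | h
    · rw [hadef, h]; exact hGa0
    · exact le_trans (hmono a a0 h ha0neg).le hGa0
  have hcont : ContinuousOn G (Icc a ϑb) := by
    intro x hx
    have hx0 : x < 0 := lt_of_le_of_lt hx.2 hb2
    have hca : ContinuousAt G x := by
      have hGfun : G = fun ϑ => ap * (∫ x in Ioi (0:ℝ), memmFp lp ϑ x)
          + am * (∫ x in Ioi (0:ℝ), memmFm lm ϑ x) := funext hGeq
    
      rw [hGfun]
      exact (continuousAt_const.mul (memm_Ip_continuousAt hlp hx0)).add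
        (continuousAt_const.mul (memm_Im_continuousAt x hlm))
    exact hca.continuousWithinAt
  have hmem : r - q ∈ Icc (G a) (G ϑb) := ⟨hGa, hGb⟩
  obtain ⟨ϑ, hϑmem, hϑeq⟩ := intermediate_value_Icc ha_lt_b.le hcont hmem
  have hϑ0 : ϑ < 0 := lt_of_le_of_lt hϑmem.2 hb2
  refine ⟨ϑ, ⟨hϑ0, hϑeq⟩, ?_⟩
  rintro y ⟨hy0, hyeq⟩
  by_contra hne
  rcases lt_or_gt_of_ne hne with h | h
  · have := hmono y ϑ h hϑ0
    rw [hyeq, hϑeq] at this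
    exact lt_irrefl _ this
  · have := hmono ϑ y h hy0
    rw [hyeq, hϑeq] at this
    exact lt_irrefl _ this
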